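/- Let φ be the standard normal density and Φ its cdf, fix k, b ∈ ℝ, and let f(z) = c e^{k|z|} φ(z − b) with c^{−1} = e^{kb+k²/2} Φ(k+b) + e^{−kb+k²/2} Φ(k−b). Set p = e^{−kb} Φ(k−b) / (e^{kb} Φ(k+b) + e^{−kb} Φ(k−b)). Then for every z ≤ 0, f(z) = p · φ(z + k − b)/Φ(k − b), and for every z > 0, f(z) = (1 − p) · φ(z − k − b)/Φ(k + b); that is, f is the mixture, with weights p and 1−p, of the normal N(b−k,1) density truncated to (−∞,0) and the normal N(b+k,1) density truncated to (0,∞). -/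

import Mathlib

open MeasureTheory Real Set

noncomputable def phi (x : ℝ) : ℝ := (Real.sqrt (2 * Real.pi))⁻¹ * Real.exp (-(x ^ 2) / 2)

noncomputable def Phi (x : ℝ) : ℝ := ∫ t in Set.Iic x, phi t

lemma phi_pos (x : ℝ) : 0 < phi x := by
  apply mul_pos (inv_pos.mpr (Real.sqrt_pos.mpr (by positivity))) (Real.exp_pos _)

lemma phi_eq (x : ℝ) : phi x = (Real.sqrt (2 * Real.pi))⁻¹ * Real.exp (-(1/2) * x ^ 2) := by
  unfold phi; ring_nf

lemma integrable_phi : Integrable phi := by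
  rw [show phi = fun x => (Real.sqrt (2 * Real.pi))⁻¹ * Real.exp (-(1/2) * x ^ 2) from funext phi_eq]
  exact (integrable_exp_neg_mul_sq (by norm_num : (0:ℝ) < 1/2)).const_mul _

lemma Phi_pos (x : ℝ) : 0 < Phi x := by
  rw [Phi, setIntegral_pos_iff_support_of_nonneg_ae]
  · have : Function.support phi = univ := by
      ext y; simp [Function.mem_support, (phi_pos y).ne']
    rw [this, univ_inter]
    simp [Real.volume_Iic]
  · exact Filter.Eventually.of_forall fun y => (phi_pos y).le
  · exact integrable_phi.integrableOn

lemma shift_integral (f : ℝ → ℝ) (a : ℝ) (s : Set ℝ) :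
    ∫ x in (fun x => x + a) ⁻¹' s, f (x + a) = ∫ x in s, f x := by
  have A : MeasurableEmbedding (fun x : ℝ => x + a) :=
    (Homeomorph.addRight a).isClosedEmbedding.measurableEmbedding
  rw [← A.setIntegral_map f s, map_add_right_eq_self volume a]

lemma int_Iio (a : ℝ) : (∫ z in Set.Iio (0:ℝ), phi (z + a)) = Phi a := by
  have := shift_integral phi a (Iio a)
  rw [preimage_add_const_Iio] at this
  rw [show a - a = 0 by ring] at this
  rw [this, Phi, integral_Iic_eq_integral_Iio]

lemma int_Ioi (a : ℝ) : (∫ z in Set.Ioi (0:ℝ), phi (z - a)) = Phi a := by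
  have h1 : (∫ z in Set.Ioi (0:ℝ), phi (z - a)) = ∫ z in Set.Ioi (0:ℝ), phi (-z + a) := by
    apply setIntegral_congr_fun measurableSet_Ioi
    intro z _
    have h : (-z + a) ^ 2 = (z - a) ^ 2 := by ring
    simp [phi, h]
  rw [h1, integral_comp_neg_Ioi 0 (fun x => phi (x + a)), neg_zero]
  have := shift_integral phi a (Iic a)
  rw [preimage_add_const_Iic, show a - a = 0 by ring] at this
  rw [this, Phi]

lemma exp_mul_phi (a x : ℝ) : Real.exp (a * x) * phi x = Real.exp (a ^ 2 / 2) * phi (x - a) := by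
  have h : Real.exp (a * x) * Real.exp (-(x ^ 2) / 2)
      = Real.exp (a ^ 2 / 2) * Real.exp (-((x - a) ^ 2) / 2) := by
    rw [← Real.exp_add, ← Real.exp_add]; ring_nf
  unfold phi
  rw [mul_left_comm, h]; ring
theorem stmt_17 (k b : ℝ) :
    let c : ℝ := (Real.exp (k * b + k ^ 2 / 2) * Phi (k + b) +
      Real.exp (-(k * b) + k ^ 2 / 2) * Phi (k - b))⁻¹
    let f : ℝ → ℝ := fun z => c * Real.exp (k * |z|) * phi (z - b)
    let p : ℝ := Real.exp (-(k * b)) * Phi (k - b) /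
      (Real.exp (k * b) * Phi (k + b) + Real.exp (-(k * b)) * Phi (k - b))
    (∀ z ≤ (0 : ℝ), f z = p * (phi (z + k - b) / Phi (k - b))) ∧
      (∀ z > (0 : ℝ), f z = (1 - p) * (phi (z - k - b) / Phi (k + b))) ∧
      (∫ z in Set.Iio (0 : ℝ), phi (z + k - b)) = Phi (k - b) ∧
      (∫ z in Set.Ioi (0 : ℝ), phi (z - k - b)) = Phi (k + b) := by
  intro c f p
  have hP1 : 0 < Phi (k - b) := Phi_pos _
  have hP2 : 0 < Phi (k + b) := Phi_pos _
  have hDpos : 0 < Real.exp (k * b) * Phi (k + b) + Real.exp (-(k * b)) * Phi (k - b) := by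
    positivity
  have hcden : Real.exp (k * b + k ^ 2 / 2) * Phi (k + b) +
      Real.exp (-(k * b) + k ^ 2 / 2) * Phi (k - b) =
      Real.exp (k ^ 2 / 2) *
        (Real.exp (k * b) * Phi (k + b) + Real.exp (-(k * b)) * Phi (k - b)) := by
    rw [Real.exp_add, Real.exp_add]; ring
  have hc : c = (Real.exp (k ^ 2 / 2) *
      (Real.exp (k * b) * Phi (k + b) + Real.exp (-(k * b)) * Phi (k - b)))⁻¹ := by
    show (Real.exp (k * b + k ^ 2 / 2) * Phi (k + b) +
      Real.exp (-(k * b) + k ^ 2 / 2) * Phi (k - b))⁻¹ = _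
    rw [hcden]
  refine ⟨fun z hz => ?_, fun z hz => ?_, ?_, ?_⟩
  · show c * Real.exp (k * |z|) * phi (z - b) = p * (phi (z + k - b) / Phi (k - b))
    rw [abs_of_nonpos hz]
    have key : Real.exp (k * -z) * phi (z - b) =
        Real.exp (-(k * b)) * (Real.exp (k ^ 2 / 2) * phi (z + k - b)) := by
      have h := exp_mul_phi (-k) (z - b)
      have e1 : Real.exp (k * -z) = Real.exp (-(k * b)) * Real.exp (-k * (z - b)) := by
        rw [← Real.exp_add]; ring_nf
      rw [e1, mul_assoc, h, show z - b - -k = z + k - b by ring,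
        show (-k) ^ 2 = k ^ 2 by ring]
    calc c * Real.exp (k * -z) * phi (z - b)
        = c * Real.exp (-(k * b)) * Real.exp (k ^ 2 / 2) * phi (z + k - b) := by
          rw [mul_assoc, key]; ring
      _ = p * (phi (z + k - b) / Phi (k - b)) := by
          show _ = Real.exp (-(k * b)) * Phi (k - b) /
            (Real.exp (k * b) * Phi (k + b) + Real.exp (-(k * b)) * Phi (k - b)) *
            (phi (z + k - b) / Phi (k - b))
          rw [hc]
          field_simp
  · show c * Real.exp (k * |z|) * phi (z - b) = (1 - p) * (phi (z - k - b) / Phi (k + b))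
    rw [abs_of_pos hz]
    have key : Real.exp (k * z) * phi (z - b) =
        Real.exp (k * b) * (Real.exp (k ^ 2 / 2) * phi (z - k - b)) := by
      have h := exp_mul_phi k (z - b)
      have e1 : Real.exp (k * z) = Real.exp (k * b) * Real.exp (k * (z - b)) := by
        rw [← Real.exp_add]; ring_nf
      rw [e1, mul_assoc, h, show z - b - k = z - k - b by ring]
    have hp : 1 - p = Real.exp (k * b) * Phi (k + b) /
        (Real.exp (k * b) * Phi (k + b) + Real.exp (-(k * b)) * Phi (k - b)) := by
      show 1 - Real.exp (-(k * b)) * Phi (k - b) /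
        (Real.exp (k * b) * Phi (k + b) + Real.exp (-(k * b)) * Phi (k - b)) = _
      field_simp
      ring
    calc c * Real.exp (k * z) * phi (z - b)
        = c * Real.exp (k * b) * Real.exp (k ^ 2 / 2) * phi (z - k - b) := by
          rw [mul_assoc, key]; ring
      _ = (1 - p) * (phi (z - k - b) / Phi (k + b)) := by
          rw [hp, hc]
          field_simp
  · rw [show (fun z => phi (z + k - b)) = fun z => phi (z + (k - b)) from
      funext fun z => by rw [add_sub_assoc]]
    exact int_Iio (k - b)
  · rw [show (fun z => phi (z - k - b)) = fun z => phi (z - (k + b)) from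
      funext fun z => by rw [sub_sub]]
    exact int_Ioi (k + b)
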